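/- Let 𝔉 : ℝ → ℝ be continuously differentiable, with 𝔉' even, nonnegative, and decreasing on [0,∞), and suppose the limits 𝔉(±∞) exist with 𝔉(+∞) − 𝔉(−∞) = (μ−ν)π. Then: (i) for all x ∈ ℝ, D𝔉(0, x) = D𝔉(0, −x) (the Hilbert-transform difference is an even function of x); (ii) for all 0 ≤ x < y, D𝔉(x, y) ≥ 0 (it is increasing on [0,∞)); and (iii) for all y > x ≥ 0, D𝔉(x, y) = (1/π) ∫ₓʸ (𝔉(γ) − 𝔉(−γ))/γ dγ + ℜ(x,y) with −2(μ−ν) ≤ ℜ(x,y) ≤ 2(μ−ν). -/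

import Mathlib

open MeasureTheory Real Filter Set

set_option maxHeartbeats 1000000

/-- The Hilbert-transform difference
`D𝔉(x,y) = (1/π)∫₀^∞ (𝔉(y−γ) − 𝔉(y+γ) − 𝔉(x−γ) + 𝔉(x+γ))/γ dγ`,
formally equal to `H𝔉(y) − H𝔉(x)`. -/
noncomputable def DF (F : ℝ → ℝ) (x y : ℝ) : ℝ :=
  (1 / Real.pi) * ∫ γ in Set.Ioi (0 : ℝ), (F (y - γ) - F (y + γ) - F (x - γ) + F (x + γ)) / γ

section ptwise
variable (f : ℝ → ℝ)
noncomputable def uu (t γ : ℝ) : ℝ := (f (t-γ) - f (t+γ))/γ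
noncomputable def vv (t γ : ℝ) : ℝ := if γ < 2*t then f (t-γ)/t else 0
noncomputable def ww (t γ : ℝ) : ℝ := uu f t γ - vv f t γ
noncomputable def A1 (t γ : ℝ) : ENNReal := if 2*t ≤ γ then ENNReal.ofReal (f (γ-t)/γ) else 0
noncomputable def A2 (t γ : ℝ) : ENNReal :=
  if 2*γ ≤ t then ENNReal.ofReal ((f (t-γ) - f (t+γ))/γ) else 0
noncomputable def A3 (t γ : ℝ) : ENNReal :=
  if γ ≤ t ∧ t ≤ 2*γ then ENNReal.ofReal (2*(t-γ)*f (t-γ)/t^2) else 0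
noncomputable def B1 (t γ : ℝ) : ENNReal := if γ ≤ t then ENNReal.ofReal (f (t+γ)/t) else 0
noncomputable def B2 (t γ : ℝ) : ENNReal :=
  if t ≤ γ ∧ γ ≤ 2*t then ENNReal.ofReal ((γ-t)*f (γ-t)/t^2) else 0
noncomputable def B3 (t γ : ℝ) : ENNReal :=
  if t ≤ γ ∧ γ ≤ 2*t then ENNReal.ofReal (f (t+γ)/t) else 0
end ptwise

variable {F f : ℝ → ℝ}


lemma hasDerivAt_sum (hd : ∀ x, HasDerivAt F (f x) x) (s : ℝ) :
    HasDerivAt (fun t => F t + F (-t)) (f s - f (-s)) s := by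
  have h1 : HasDerivAt (fun t : ℝ => F (-t)) (f (-s) * (-1)) s :=
    (hd (-s)).comp s (hasDerivAt_neg s)
  simpa [mul_comm, sub_eq_add_neg] using (hd s).fun_add h1

lemma odd_sum (hd : ∀ x, HasDerivAt F (f x) x) (he : ∀ x, f (-x) = f x) (t : ℝ) :
    F t + F (-t) = 2 * F 0 := by
  have key : ∀ s : ℝ, F s + F (-s) = F 0 + F (-0) := by
    have hdiff : Differentiable ℝ (fun t => F t + F (-t)) :=
      fun s => (hasDerivAt_sum hd s).differentiableAt
    have hz : ∀ s, deriv (fun t => F t + F (-t)) s = 0 := by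
      intro s
      rw [(hasDerivAt_sum hd s).deriv, he s, sub_self]
    intro s
    have := is_const_of_deriv_eq_zero hdiff hz s 0
    simpa using this
  have := key t
  simp at this
  linarith

lemma mono_F (hd : ∀ x, HasDerivAt F (f x) x) (hn : ∀ x, 0 ≤ f x) : Monotone F := by
  apply monotone_of_deriv_nonneg (fun s => (hd s).differentiableAt)
  intro s; rw [(hd s).deriv]; exact hn s

lemma ftc (hd : ∀ x, HasDerivAt F (f x) x) (hc : Continuous f) (p q : ℝ) :
    ∫ s in p..q, f s = F q - F p :=
  intervalIntegral.integral_eq_sub_of_hasDerivAt (fun s _ => hd s)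
    (hc.intervalIntegrable p q)

lemma f_pair (he : ∀ x, f (-x) = f x) (hdec : AntitoneOn f (Set.Ici (0:ℝ)))
    {t γ : ℝ} (ht : 0 ≤ t) (hγ : 0 ≤ γ) : f (t + γ) ≤ f (t - γ) := by
  have h1 : f (t - γ) = f (|t - γ|) := by
    rcases abs_cases (t - γ) with ⟨h, _⟩ | ⟨h, _⟩
    · rw [h]
    · rw [h, he]
  rw [h1]
  exact hdec (mem_Ici.2 (abs_nonneg _)) (mem_Ici.2 (by linarith)) (by
    rw [abs_le]; constructor <;> linarith)

lemma f_even' (he : ∀ x, f (-x) = f x) (t γ : ℝ) : f (t - γ) = f (γ - t) := by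
  rw [← he (γ - t)]; ring_nf

lemma wpos_ptwise (he : ∀ x, f (-x) = f x) (hn : ∀ x, 0 ≤ f x)
    (hdec : AntitoneOn f (Set.Ici (0:ℝ))) {t γ : ℝ} (ht : 0 < t) (hγ : 0 < γ) :
    ENNReal.ofReal (ww f t γ) ≤ A1 f t γ + A2 f t γ + A3 f t γ := by
  rcases le_or_gt (2*t) γ with hcase | hcase
  · -- γ ≥ 2t
    have hw : ww f t γ = (f (t-γ) - f (t+γ))/γ := by
      unfold ww vv uu; rw [if_neg (by linarith), sub_zero]
    have hle : ww f t γ ≤ f (γ-t)/γ := by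
      rw [hw, f_even' he]
      have := hn (t+γ)
      gcongr
      linarith
    calc ENNReal.ofReal (ww f t γ) ≤ A1 f t γ := by
          rw [A1, if_pos hcase]; exact ENNReal.ofReal_le_ofReal hle
      _ ≤ A1 f t γ + A2 f t γ + A3 f t γ := by
          exact le_add_right (le_add_right le_rfl)
  · have hw : ww f t γ = (f (t-γ) - f (t+γ))/γ - f (t-γ)/t := by
      unfold ww vv uu; rw [if_pos hcase]
    rcases le_or_gt γ t with hγt | hγt
    · -- γ ≤ t
      rcases le_or_gt (2*γ) t with h2γ | h2γ
      · -- A2 case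
        have hle : ww f t γ ≤ (f (t-γ) - f (t+γ))/γ := by
          rw [hw]
          have : 0 ≤ f (t-γ)/t := div_nonneg (hn _) ht.le
          linarith
        calc ENNReal.ofReal (ww f t γ) ≤ A2 f t γ := by
              rw [A2, if_pos h2γ]; exact ENNReal.ofReal_le_ofReal hle
          _ ≤ A1 f t γ + A2 f t γ + A3 f t γ := le_add_right (le_add_left le_rfl)
      · -- A3 case
        have hf12 : f (t+γ) ≤ f (t-γ) := f_pair he hdec ht.le hγ.le
        have hle : ww f t γ ≤ 2*(t-γ)*f (t-γ)/t^2 := by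
          rw [hw, div_sub_div _ _ (ne_of_gt hγ) (ne_of_gt ht),
            div_le_div_iff₀ (by positivity) (by positivity)]
          nlinarith [mul_nonneg (mul_nonneg (sub_nonneg.2 hγt) (sub_nonneg.2 h2γ.le))
            (mul_nonneg ht.le (hn (t-γ))), mul_nonneg (mul_nonneg hγ.le ht.le)
            (mul_nonneg ht.le (hn (t+γ))), sq_nonneg t, mul_pos hγ ht]
        calc ENNReal.ofReal (ww f t γ) ≤ A3 f t γ := by
              rw [A3, if_pos ⟨hγt, h2γ.le⟩]; exact ENNReal.ofReal_le_ofReal hle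
          _ ≤ A1 f t γ + A2 f t γ + A3 f t γ := le_add_left le_rfl
    · -- t < γ < 2t : ww ≤ 0
      have hle : ww f t γ ≤ 0 := by
        rw [hw]
        have h1 : f (t-γ)/γ ≤ f (t-γ)/t :=
          div_le_div_of_nonneg_left (hn _) ht hγt.le
        have h2 : (0:ℝ) ≤ f (t+γ)/γ := div_nonneg (hn _) hγ.le
        have : (f (t-γ) - f (t+γ))/γ = f (t-γ)/γ - f (t+γ)/γ := by ring
        linarith [this ▸ le_refl ((f (t-γ) - f (t+γ))/γ)]
      rw [ENNReal.ofReal_eq_zero.2 hle]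
      exact zero_le

lemma wneg_ptwise (he : ∀ x, f (-x) = f x) (hn : ∀ x, 0 ≤ f x)
    (hdec : AntitoneOn f (Set.Ici (0:ℝ))) {t γ : ℝ} (ht : 0 < t) (hγ : 0 < γ) :
    ENNReal.ofReal (-ww f t γ) ≤ B1 f t γ + B2 f t γ + B3 f t γ := by
  rcases le_or_gt (2*t) γ with hcase | hcase
  · -- γ ≥ 2t : ww ≥ 0
    have hw : ww f t γ = (f (t-γ) - f (t+γ))/γ := by
      unfold ww vv uu; rw [if_neg (by linarith), sub_zero]
    have hge : 0 ≤ ww f t γ := by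
      rw [hw]
      apply div_nonneg _ hγ.le
      rw [f_even' he]
      have : f (γ + t) ≤ f (γ - t) := f_pair he hdec (by linarith) ht.le
      have heq : γ + t = t + γ := by ring
      rw [heq] at this
      linarith
    rw [ENNReal.ofReal_eq_zero.2 (by linarith)]
    exact zero_le
  · have hw : ww f t γ = (f (t-γ) - f (t+γ))/γ - f (t-γ)/t := by
      unfold ww vv uu; rw [if_pos hcase]
    rcases le_or_gt γ t with hγt | hγt
    · -- γ ≤ t : -ww ≤ f(t+γ)/t
      have hf12 : f (t+γ) ≤ f (t-γ) := f_pair he hdec ht.le hγ.le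
      have hle : -ww f t γ ≤ f (t+γ)/t := by
        rw [hw]
        have h1 : (f (t-γ) - f (t+γ))/t ≤ (f (t-γ) - f (t+γ))/γ :=
          div_le_div_of_nonneg_left (by linarith) hγ hγt
        have hsplit : (f (t-γ) - f (t+γ))/t = f (t-γ)/t - f (t+γ)/t := by ring
        linarith
      calc ENNReal.ofReal (-ww f t γ) ≤ B1 f t γ := by
            rw [B1, if_pos hγt]; exact ENNReal.ofReal_le_ofReal hle
        _ ≤ B1 f t γ + B2 f t γ + B3 f t γ := le_add_right (le_add_right le_rfl)
    · -- t < γ < 2t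
      have hle : -ww f t γ ≤ (γ-t)*f (γ-t)/t^2 + f (t+γ)/t := by
        rw [hw, f_even' he]
        have h1 : f (t+γ)/γ ≤ f (t+γ)/t := div_le_div_of_nonneg_left (hn _) ht hγt.le
        have h2 : f (γ-t)/t - f (γ-t)/γ ≤ (γ-t)*f (γ-t)/t^2 := by
          rw [div_sub_div _ _ (ne_of_gt ht) (ne_of_gt hγ),
            div_le_div_iff₀ (by positivity) (by positivity)]
          nlinarith [mul_nonneg (mul_nonneg (sub_nonneg.2 hγt.le) (sub_nonneg.2 hγt.le))
            (mul_nonneg ht.le (hn (γ-t))), mul_nonneg ht.le (hn (γ-t)), mul_pos ht hγ]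
        have hsplit : (f (γ-t) - f (t+γ))/γ = f (γ-t)/γ - f (t+γ)/γ := by ring
        linarith
      have hcond : t ≤ γ ∧ γ ≤ 2*t := ⟨hγt.le, hcase.le⟩
      calc ENNReal.ofReal (-ww f t γ)
          ≤ ENNReal.ofReal ((γ-t)*f (γ-t)/t^2) + ENNReal.ofReal (f (t+γ)/t) :=
            le_trans (ENNReal.ofReal_le_ofReal hle) (ENNReal.ofReal_add_le)
        _ = B2 f t γ + B3 f t γ := by rw [B2, B3, if_pos hcond, if_pos hcond]
        _ ≤ B1 f t γ + B2 f t γ + B3 f t γ := by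
            rw [add_assoc]; exact le_add_self

lemma lint_Ioi_le {g : ℝ → ℝ} (hm : Measurable g) (a M : ℝ)
    (hint : ∀ n : ℕ, IntegrableOn g (Ioc a (a + n)))
    (hnn : ∀ s, a < s → 0 ≤ g s)
    (hb : ∀ n : ℕ, ∫ s in Ioc a (a + n), g s ≤ M) :
    ∫⁻ s in Ioi a, ENNReal.ofReal (g s) ≤ ENNReal.ofReal M := by
  set G : ℕ → ℝ → ENNReal := fun n => (Ioc a (a + n)).indicator (fun s => ENNReal.ofReal (g s))
  have hmono : Monotone G := by
    intro m n hmn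
    apply indicator_le_indicator_of_subset
    · exact Ioc_subset_Ioc le_rfl (by have : (m:ℝ) ≤ n := Nat.cast_le.2 hmn; linarith)
    · intro x; exact zero_le
  have hGm : ∀ n, Measurable (G n) := fun n =>
    (hm.ennreal_ofReal).indicator measurableSet_Ioc
  have hsup : ∀ s, (Ioi a).indicator (fun s => ENNReal.ofReal (g s)) s = ⨆ n, G n s := by
    intro s
    by_cases hs : a < s
    · rw [indicator_of_mem (mem_Ioi.2 hs)]
      apply le_antisymm
      · obtain ⟨n, hn⟩ := exists_nat_ge (s - a)
        refine le_iSup_of_le n ?_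
        have : G n s = ENNReal.ofReal (g s) :=
          indicator_of_mem (mem_Ioc.2 ⟨hs, by linarith⟩) _
        rw [this]
      · exact iSup_le fun n => indicator_le (fun _ _ => le_rfl) s
    · rw [indicator_of_notMem (by simpa using hs)]
      symm
      simp only [ENNReal.iSup_eq_zero]
      intro n
      apply indicator_of_notMem
      intro hmem; exact hs hmem.1
  calc ∫⁻ s in Ioi a, ENNReal.ofReal (g s)
      = ∫⁻ s, (Ioi a).indicator (fun s => ENNReal.ofReal (g s)) s := by
        rw [lintegral_indicator measurableSet_Ioi]
    _ = ∫⁻ s, ⨆ n, G n s := by exact lintegral_congr hsup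
    _ = ⨆ n, ∫⁻ s, G n s := lintegral_iSup hGm hmono
    _ ≤ ENNReal.ofReal M := by
        apply iSup_le
        intro n
        rw [lintegral_indicator measurableSet_Ioc]
        rw [← ofReal_integral_eq_lintegral_ofReal (hint n)
          ((ae_restrict_iff' measurableSet_Ioc).2 (ae_of_all _ fun s hs => hnn s hs.1))]
        exact ENNReal.ofReal_le_ofReal (hb n)

lemma layer (hd : ∀ x, HasDerivAt F (f x) x) (hc : Continuous f) (hn : ∀ x, 0 ≤ f x)
    (k₁ k₂ : ℝ) (h1 : 0 < k₁) (h12 : k₁ ≤ k₂) :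
    ∫⁻ t in Ioi (0:ℝ), ENNReal.ofReal ((F (k₂*t) - F (k₁*t))/t) ≤
      ENNReal.ofReal (Real.log (k₂/k₁)) * ∫⁻ s in Ioi (0:ℝ), ENNReal.ofReal (f s) := by
  have hk2 : 0 < k₂ := lt_of_lt_of_le h1 h12
  have hfm : Measurable f := hc.measurable
  set V : ℝ → ℝ → ENNReal := fun t s =>
    if k₁*t < s ∧ s ≤ k₂*t then ENNReal.ofReal (f s / t) else 0 with hV
  have hVmeas : Measurable (Function.uncurry V) := by
    have hset : MeasurableSet {p : ℝ × ℝ | k₁*p.1 < p.2 ∧ p.2 ≤ k₂*p.1} := by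
      apply MeasurableSet.inter
      · exact measurableSet_lt (measurable_fst.const_mul k₁) measurable_snd
      · exact measurableSet_le measurable_snd (measurable_fst.const_mul k₂)
    exact Measurable.ite hset
      (((hfm.comp measurable_snd).div measurable_fst).ennreal_ofReal) measurable_const
  -- step A : pointwise identity on Ioi 0
  have stepA : ∀ t ∈ Ioi (0:ℝ),
      ENNReal.ofReal ((F (k₂*t) - F (k₁*t))/t) = ∫⁻ s in Ioi (0:ℝ), V t s := by
    intro t ht
    rw [mem_Ioi] at ht
    have hsub : Ioc (k₁*t) (k₂*t) ⊆ Ioi (0:ℝ) := fun s hs =>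
      mem_Ioi.2 (lt_trans (by positivity) hs.1)
    have h2 : ∫⁻ s in Ioi (0:ℝ), V t s
        = ∫⁻ s in Ioc (k₁*t) (k₂*t), ENNReal.ofReal (f s / t) := by
      have : ∀ s, V t s = (Ioc (k₁*t) (k₂*t)).indicator
          (fun s => ENNReal.ofReal (f s / t)) s := by
        intro s
        simp only [hV, indicator, mem_Ioc]
      simp_rw [this]
      rw [lintegral_indicator measurableSet_Ioc, Measure.restrict_restrict measurableSet_Ioc,
        inter_eq_left.2 hsub]
    rw [h2, ← ofReal_integral_eq_lintegral_ofReal]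
    · congr 1
      rw [← intervalIntegral.integral_of_le (by nlinarith), intervalIntegral.integral_div,
        ftc hd hc]
    · exact (hc.integrableOn_Ioc).div_const t
    · exact (ae_restrict_iff' measurableSet_Ioc).2 (ae_of_all _ fun s _ =>
        div_nonneg (hn s) (le_of_lt ht))
  rw [setLIntegral_congr_fun_ae measurableSet_Ioi (ae_of_all _ stepA)]
  -- step B : swap
  rw [lintegral_lintegral_swap (hVmeas.aemeasurable)]
  -- step C : inner bound
  have stepC : ∀ s ∈ Ioi (0:ℝ),
      ∫⁻ t in Ioi (0:ℝ), V t s ≤ ENNReal.ofReal (f s) * ENNReal.ofReal (Real.log (k₂/k₁)) := by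
    intro s hs
    rw [mem_Ioi] at hs
    have hpt : ∀ t ∈ Ioi (0:ℝ), V t s =
        (Ico (s/k₂) (s/k₁)).indicator (fun t => ENNReal.ofReal (f s) * ENNReal.ofReal t⁻¹) t := by
      intro t ht
      rw [mem_Ioi] at ht
      have hiff : (k₁*t < s ∧ s ≤ k₂*t) ↔ t ∈ Ico (s/k₂) (s/k₁) := by
        rw [mem_Ico, div_le_iff₀ hk2, lt_div_iff₀ h1]
        constructor
        · rintro ⟨u, v⟩; constructor <;> linarith [mul_comm t k₁, mul_comm t k₂]
        · rintro ⟨u, v⟩; constructor <;> linarith [mul_comm t k₁, mul_comm t k₂]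
      simp only [hV, indicator]
      by_cases hcond : k₁*t < s ∧ s ≤ k₂*t
      · rw [if_pos hcond, if_pos (hiff.1 hcond), div_eq_mul_inv, ENNReal.ofReal_mul (hn s)]
      · rw [if_neg hcond, if_neg (fun hmem => hcond (hiff.2 hmem))]
    rw [setLIntegral_congr_fun_ae measurableSet_Ioi (ae_of_all _ hpt)]
    have hsub2 : Ico (s/k₂) (s/k₁) ⊆ Ioi (0:ℝ) := fun t ht =>
      mem_Ioi.2 (lt_of_lt_of_le (by positivity) ht.1)
    rw [lintegral_indicator measurableSet_Ico, Measure.restrict_restrict measurableSet_Ico,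
      inter_eq_left.2 hsub2]
    rw [lintegral_const_mul _ (measurable_inv.ennreal_ofReal)]
    apply mul_le_mul_right
    have hinteq : ∫⁻ t in Ico (s/k₂) (s/k₁), ENNReal.ofReal t⁻¹
        = ENNReal.ofReal (∫ t in Ico (s/k₂) (s/k₁), t⁻¹) := by
      rw [← ofReal_integral_eq_lintegral_ofReal]
      · exact (ContinuousOn.integrableOn_compact isCompact_Icc
          (continuousOn_inv₀.mono (fun t ht => ne_of_gt (lt_of_lt_of_le (by positivity) ht.1)))).mono_set
          Ico_subset_Icc_self
      · exact (ae_restrict_iff' measurableSet_Ico).2 (ae_of_all _ fun t ht =>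
          inv_nonneg.2 (le_of_lt (lt_of_lt_of_le (by positivity) ht.1)))
    rw [hinteq]
    apply ENNReal.ofReal_le_ofReal
    rw [MeasureTheory.integral_Ico_eq_integral_Ioo, ← MeasureTheory.integral_Ioc_eq_integral_Ioo,
      ← intervalIntegral.integral_of_le
      (by apply div_le_div_of_nonneg_left (le_of_lt hs) h1 h12),
      integral_inv_of_pos (by positivity) (by positivity)]
    apply le_of_eq
    congr 1
    field_simp
  calc ∫⁻ s in Ioi (0:ℝ), ∫⁻ t in Ioi (0:ℝ), V t s
      ≤ ∫⁻ s in Ioi (0:ℝ), ENNReal.ofReal (f s) * ENNReal.ofReal (Real.log (k₂/k₁)) :=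
        setLIntegral_mono' measurableSet_Ioi stepC
    _ = ENNReal.ofReal (Real.log (k₂/k₁)) * ∫⁻ s in Ioi (0:ℝ), ENNReal.ofReal (f s) := by
        rw [lintegral_mul_const _ (hfm.ennreal_ofReal), mul_comm]

lemma lint_sq_inv {a : ℝ} (ha : 0 < a) :
    ∫⁻ t in Ioi a, ENNReal.ofReal ((t^2)⁻¹) ≤ ENNReal.ofReal a⁻¹ := by
  apply lint_Ioi_le (by measurability) a a⁻¹
  · intro n
    apply (ContinuousOn.integrableOn_compact isCompact_Icc
      (ContinuousOn.inv₀ (by fun_prop) (fun t ht => by nlinarith [ht.1]))).mono_set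
      Ioc_subset_Icc_self
  · intro s hs; positivity
  · intro n
    have hle : a ≤ a + (n:ℝ) := by
      have : (0:ℝ) ≤ n := Nat.cast_nonneg n
      linarith
    rw [← intervalIntegral.integral_of_le hle]
    have hftc := intervalIntegral.integral_eq_sub_of_hasDerivAt
      (f := fun t : ℝ => -t⁻¹) (f' := fun t : ℝ => (t^2)⁻¹) (a := a) (b := a + (n:ℝ))
      (by
        intro t ht
        rw [uIcc_of_le hle] at ht
        have ht0 : t ≠ 0 := ne_of_gt (lt_of_lt_of_le ha ht.1)
        simpa using (hasDerivAt_inv ht0).fun_neg)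
      (by
        apply ContinuousOn.intervalIntegrable
        rw [uIcc_of_le hle]
        exact ContinuousOn.inv₀ (by fun_prop) (fun t ht => by nlinarith [ht.1]))
    rw [hftc]
    have : 0 ≤ (a + (n:ℝ))⁻¹ := by positivity
    linarith

lemma pat2 (hc : Continuous f) (hn : ∀ x, 0 ≤ f x) (m k : ℝ) (hm : 0 ≤ m) (hk : 0 < k) :
    ∫⁻ t in Ioi (0:ℝ), ENNReal.ofReal ((m/t^2) * ∫ u in (0:ℝ)..(t/k), u * f u) ≤
      ENNReal.ofReal (m/k) * ∫⁻ s in Ioi (0:ℝ), ENNReal.ofReal (f s) := by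
  have hfm : Measurable f := hc.measurable
  set V : ℝ → ℝ → ENNReal := fun t u =>
    if 0 < u ∧ u ≤ t/k then ENNReal.ofReal (m * (u * f u) / t^2) else 0 with hV
  have hVmeas : Measurable (Function.uncurry V) := by
    have hset : MeasurableSet {p : ℝ × ℝ | 0 < p.2 ∧ p.2 ≤ p.1/k} := by
      apply MeasurableSet.inter
      · exact measurableSet_lt measurable_const measurable_snd
      · exact measurableSet_le measurable_snd (measurable_fst.div_const k)
    apply Measurable.ite hset _ measurable_const
    apply Measurable.ennreal_ofReal
    apply Measurable.div
    · exact (measurable_snd.mul (hfm.comp measurable_snd)).const_mul m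
    · exact measurable_fst.pow_const 2
  have stepA : ∀ t ∈ Ioi (0:ℝ),
      ENNReal.ofReal ((m/t^2) * ∫ u in (0:ℝ)..(t/k), u * f u) = ∫⁻ u in Ioi (0:ℝ), V t u := by
    intro t ht
    rw [mem_Ioi] at ht
    have htk : (0:ℝ) ≤ t/k := by positivity
    have h2 : ∫⁻ u in Ioi (0:ℝ), V t u
        = ∫⁻ u in Ioc (0:ℝ) (t/k), ENNReal.ofReal (m * (u * f u) / t^2) := by
      have hptw : ∀ u, V t u = (Ioc (0:ℝ) (t/k)).indicator
          (fun u => ENNReal.ofReal (m * (u * f u) / t^2)) u := by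
        intro u; simp only [hV, indicator, mem_Ioc]
      simp_rw [hptw]
      rw [lintegral_indicator measurableSet_Ioc, Measure.restrict_restrict measurableSet_Ioc,
        inter_eq_left.2 (fun u hu => mem_Ioi.2 hu.1)]
    rw [h2, ← ofReal_integral_eq_lintegral_ofReal]
    · congr 1
      rw [← intervalIntegral.integral_of_le htk]
      rw [← intervalIntegral.integral_const_mul]
      apply intervalIntegral.integral_congr
      intro u _
      field_simp
    · exact ((by fun_prop : Continuous fun u => m * (u * f u) / t^2)).integrableOn_Ioc
    · exact (ae_restrict_iff' measurableSet_Ioc).2 (ae_of_all _ fun u hu => by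
        have := hn u; have := hu.1; positivity)
  rw [setLIntegral_congr_fun_ae measurableSet_Ioi (ae_of_all _ stepA)]
  rw [lintegral_lintegral_swap (hVmeas.aemeasurable)]
  have stepC : ∀ u ∈ Ioi (0:ℝ),
      ∫⁻ t in Ioi (0:ℝ), V t u ≤ ENNReal.ofReal (m/k) * ENNReal.ofReal (f u) := by
    intro u hu
    rw [mem_Ioi] at hu
    have hpt : ∀ t ∈ Ioi (0:ℝ), V t u =
        (Ici (k*u)).indicator (fun t => ENNReal.ofReal (m * (u * f u)) * ENNReal.ofReal ((t^2)⁻¹)) t := by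
      intro t ht
      rw [mem_Ioi] at ht
      have hiff : (0 < u ∧ u ≤ t/k) ↔ t ∈ Ici (k*u) := by
        rw [mem_Ici]
        constructor
        · rintro ⟨_, h⟩
          rw [le_div_iff₀ hk] at h; linarith [mul_comm u k]
        · intro h
          exact ⟨hu, by rw [le_div_iff₀ hk]; linarith [mul_comm u k]⟩
      simp only [hV, indicator]
      by_cases hcond : 0 < u ∧ u ≤ t/k
      · rw [if_pos hcond, if_pos (hiff.1 hcond), div_eq_mul_inv,
          ENNReal.ofReal_mul (by have := hn u; positivity)]
      · rw [if_neg hcond, if_neg (fun hmem => hcond (hiff.2 hmem))]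
    rw [setLIntegral_congr_fun_ae measurableSet_Ioi (ae_of_all _ hpt)]
    have hsub2 : Ici (k*u) ∩ Ioi (0:ℝ) = Ici (k*u) := by
      apply inter_eq_left.2
      intro t ht
      exact mem_Ioi.2 (lt_of_lt_of_le (by positivity) ht)
    rw [lintegral_indicator measurableSet_Ici, Measure.restrict_restrict measurableSet_Ici, hsub2]
    rw [lintegral_const_mul _ (by measurability)]
    have : ∫⁻ t in Ici (k*u), ENNReal.ofReal ((t^2)⁻¹) = ∫⁻ t in Ioi (k*u), ENNReal.ofReal ((t^2)⁻¹) := by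
      exact (setLIntegral_congr (Ioi_ae_eq_Ici (a := k*u))).symm
    rw [this]
    calc ENNReal.ofReal (m * (u * f u)) * ∫⁻ t in Ioi (k*u), ENNReal.ofReal ((t^2)⁻¹)
        ≤ ENNReal.ofReal (m * (u * f u)) * ENNReal.ofReal (k*u)⁻¹ :=
          mul_le_mul_right (lint_sq_inv (by positivity)) _
      _ = ENNReal.ofReal (m/k) * ENNReal.ofReal (f u) := by
          rw [← ENNReal.ofReal_mul (by have := hn u; positivity),
            ← ENNReal.ofReal_mul (by positivity)]
          congr 1
          field_simp
  calc ∫⁻ u in Ioi (0:ℝ), ∫⁻ t in Ioi (0:ℝ), V t u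
      ≤ ∫⁻ u in Ioi (0:ℝ), ENNReal.ofReal (m/k) * ENNReal.ofReal (f u) :=
        setLIntegral_mono' measurableSet_Ioi stepC
    _ = ENNReal.ofReal (m/k) * ∫⁻ s in Ioi (0:ℝ), ENNReal.ofReal (f s) :=
        lintegral_const_mul _ (hfm.ennreal_ofReal)

lemma measuu (hc : Continuous f) : Measurable (fun p : ℝ × ℝ => uu f p.1 p.2) := by
  unfold uu
  exact ((hc.measurable.comp (measurable_fst.sub measurable_snd)).sub
    (hc.measurable.comp (measurable_fst.add measurable_snd))).div measurable_snd

lemma measvv (hc : Continuous f) : Measurable (fun p : ℝ × ℝ => vv f p.1 p.2) := by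
  unfold vv
  apply Measurable.ite
  · exact measurableSet_lt measurable_snd (measurable_fst.const_mul 2)
  · exact (hc.measurable.comp (measurable_fst.sub measurable_snd)).div measurable_fst
  · exact measurable_const

lemma measww (hc : Continuous f) : Measurable (fun p : ℝ × ℝ => ww f p.1 p.2) := by
  unfold ww
  exact (measuu hc).sub (measvv hc)

lemma measA3 (hc : Continuous f) : Measurable (fun p : ℝ × ℝ => A3 f p.1 p.2) := by
  unfold A3
  apply Measurable.ite
  · exact (measurableSet_le measurable_snd measurable_fst).inter
      (measurableSet_le measurable_fst (measurable_snd.const_mul 2))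
  · apply Measurable.ennreal_ofReal
    apply Measurable.div
    · exact ((measurable_fst.sub measurable_snd).const_mul 2).mul
        (hc.measurable.comp (measurable_fst.sub measurable_snd))
    · exact measurable_fst.pow_const 2
  · exact measurable_const

lemma measB1 (hc : Continuous f) : Measurable (fun p : ℝ × ℝ => B1 f p.1 p.2) := by
  unfold B1
  apply Measurable.ite
  · exact measurableSet_le measurable_snd measurable_fst
  · exact ((hc.measurable.comp (measurable_fst.add measurable_snd)).div measurable_fst).ennreal_ofReal
  · exact measurable_const

lemma measB2 (hc : Continuous f) : Measurable (fun p : ℝ × ℝ => B2 f p.1 p.2) := by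
  unfold B2
  apply Measurable.ite
  · exact (measurableSet_le measurable_fst measurable_snd).inter
      (measurableSet_le measurable_snd (measurable_fst.const_mul 2))
  · apply Measurable.ennreal_ofReal
    apply Measurable.div
    · exact (measurable_snd.sub measurable_fst).mul
        (hc.measurable.comp (measurable_snd.sub measurable_fst))
    · exact measurable_fst.pow_const 2
  · exact measurable_const

lemma measB3 (hc : Continuous f) : Measurable (fun p : ℝ × ℝ => B3 f p.1 p.2) := by
  unfold B3
  apply Measurable.ite
  · exact (measurableSet_le measurable_fst measurable_snd).inter
      (measurableSet_le measurable_snd (measurable_fst.const_mul 2))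
  · exact ((hc.measurable.comp (measurable_fst.add measurable_snd)).div measurable_fst).ennreal_ofReal
  · exact measurable_const

lemma measA1 (hc : Continuous f) : Measurable (fun p : ℝ × ℝ => A1 f p.1 p.2) := by
  apply Measurable.ite
  · exact measurableSet_le (measurable_fst.const_mul 2) measurable_snd
  · exact ((hc.measurable.comp (measurable_snd.sub measurable_fst)).div measurable_snd).ennreal_ofReal
  · exact measurable_const

lemma measA2 (hc : Continuous f) : Measurable (fun p : ℝ × ℝ => A2 f p.1 p.2) := by
  apply Measurable.ite
  · exact measurableSet_le (measurable_snd.const_mul 2) measurable_fst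
  · exact (((hc.measurable.comp (measurable_fst.sub measurable_snd)).sub
      (hc.measurable.comp (measurable_fst.add measurable_snd))).div measurable_snd).ennreal_ofReal
  · exact measurable_const

lemma massA1 (hd : ∀ x, HasDerivAt F (f x) x) (hc : Continuous f) (hn : ∀ x, 0 ≤ f x) :
    ∫⁻ t in Ioi (0:ℝ), ∫⁻ γ in Ioi (0:ℝ), A1 f t γ ≤
      ENNReal.ofReal (Real.log 2) * ∫⁻ s in Ioi (0:ℝ), ENNReal.ofReal (f s) := by
  rw [lintegral_lintegral_swap (measA1 hc).aemeasurable]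
  have step : ∀ γ ∈ Ioi (0:ℝ), ∫⁻ t in Ioi (0:ℝ), A1 f t γ
      = ENNReal.ofReal ((F γ - F (1/2*γ))/γ) := by
    intro γ hγ
    rw [mem_Ioi] at hγ
    have hpt : ∀ t, t ∈ Ioi (0:ℝ) → A1 f t γ
        = (Ioc (0:ℝ) (γ/2)).indicator (fun t => ENNReal.ofReal (f (γ-t)/γ)) t := by
      intro t ht
      rw [mem_Ioi] at ht
      rw [A1]
      by_cases h : 2*t ≤ γ
      · rw [if_pos h, indicator_of_mem (mem_Ioc.2 ⟨ht, by linarith⟩)]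
      · rw [if_neg h, indicator_of_notMem (fun hm => by
          rw [mem_Ioc] at hm; exact h (by linarith [hm.2]))]
    rw [setLIntegral_congr_fun_ae measurableSet_Ioi (ae_of_all _ hpt),
      lintegral_indicator measurableSet_Ioc, Measure.restrict_restrict measurableSet_Ioc,
      inter_eq_left.2 (fun s hs => mem_Ioi.2 hs.1)]
    rw [← ofReal_integral_eq_lintegral_ofReal
      ((by fun_prop : Continuous fun t => f (γ-t)/γ).integrableOn_Ioc)
      ((ae_restrict_iff' measurableSet_Ioc).2 (ae_of_all _ fun s _ =>
        div_nonneg (hn _) hγ.le))]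
    congr 1
    rw [← intervalIntegral.integral_of_le (by linarith), intervalIntegral.integral_div,
      intervalIntegral.integral_comp_sub_left f γ, ftc hd hc]
    congr 3 <;> ring
  rw [setLIntegral_congr_fun_ae measurableSet_Ioi (ae_of_all _ step)]
  have := layer hd hc hn (1/2) 1 (by norm_num) (by norm_num)
  norm_num at this
  exact this

lemma massA2 (hd : ∀ x, HasDerivAt F (f x) x) (hc : Continuous f) (hn : ∀ x, 0 ≤ f x)
    (he : ∀ x, f (-x) = f x) (hdec : AntitoneOn f (Set.Ici (0:ℝ)))
    (hmono : Monotone F) :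
    ∫⁻ t in Ioi (0:ℝ), ∫⁻ γ in Ioi (0:ℝ), A2 f t γ ≤
      ENNReal.ofReal (Real.log 3) * ∫⁻ s in Ioi (0:ℝ), ENNReal.ofReal (f s) := by
  rw [lintegral_lintegral_swap (measA2 hc).aemeasurable]
  have step : ∀ γ ∈ Ioi (0:ℝ), ∫⁻ t in Ioi (0:ℝ), A2 f t γ
      ≤ ENNReal.ofReal ((F (3*γ) - F (1*γ))/γ) := by
    intro γ hγ
    rw [mem_Ioi] at hγ
    have hpt : ∀ t, t ∈ Ioi (0:ℝ) → A2 f t γ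
        = (Ici (2*γ)).indicator (fun t => ENNReal.ofReal ((f (t-γ) - f (t+γ))/γ)) t := by
      intro t ht
      rw [A2]
      by_cases h : 2*γ ≤ t
      · rw [if_pos h, indicator_of_mem (mem_Ici.2 h)]
      · rw [if_neg h, indicator_of_notMem (fun hm => h (mem_Ici.1 hm))]
    rw [setLIntegral_congr_fun_ae measurableSet_Ioi (ae_of_all _ hpt),
      lintegral_indicator measurableSet_Ici, Measure.restrict_restrict measurableSet_Ici,
      inter_eq_left.2 (fun s hs => mem_Ioi.2 (lt_of_lt_of_le (by positivity) (mem_Ici.1 hs)))]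
    rw [setLIntegral_congr (Ioi_ae_eq_Ici (a := 2*γ)).symm]
    apply lint_Ioi_le (by exact ((hc.measurable.comp (measurable_id.sub_const γ)).sub
      (hc.measurable.comp (measurable_id.add_const γ))).div_const γ) (2*γ) _
    · intro n
      exact (by fun_prop : Continuous fun t => (f (t-γ) - f (t+γ))/γ).integrableOn_Ioc
    · intro s hs
      apply div_nonneg _ hγ.le
      have := f_pair he hdec (t := s) (γ := γ) (by linarith) hγ.le
      linarith
    · intro n
      have hle : 2*γ ≤ 2*γ + (n:ℝ) := le_add_of_nonneg_right (Nat.cast_nonneg n)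
      rw [← intervalIntegral.integral_of_le hle, intervalIntegral.integral_div]
      gcongr
      rw [intervalIntegral.integral_sub
          ((by fun_prop : Continuous fun x => f (x-γ)).intervalIntegrable _ _)
          ((by fun_prop : Continuous fun x => f (x+γ)).intervalIntegrable _ _),
        intervalIntegral.integral_comp_sub_right f γ,
        intervalIntegral.integral_comp_add_right f γ, ftc hd hc, ftc hd hc]
      have e1 : 2*γ - γ = 1*γ := by ring
      have e2 : 2*γ + γ = 3*γ := by ring
      rw [e1, e2]
      have h1 : F (2*γ + (n:ℝ) - γ) ≤ F (2*γ + (n:ℝ) + γ) := hmono (by linarith)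
      linarith
  refine le_trans (setLIntegral_mono' measurableSet_Ioi step) ?_
  have := layer hd hc hn 1 3 one_pos (by norm_num)
  norm_num at this ⊢
  exact this

lemma massB3 (hd : ∀ x, HasDerivAt F (f x) x) (hc : Continuous f) (hn : ∀ x, 0 ≤ f x) :
    ∫⁻ t in Ioi (0:ℝ), ∫⁻ γ in Ioi (0:ℝ), B3 f t γ ≤
      ENNReal.ofReal (Real.log (3/2)) * ∫⁻ s in Ioi (0:ℝ), ENNReal.ofReal (f s) := by
  have step : ∀ t ∈ Ioi (0:ℝ), ∫⁻ γ in Ioi (0:ℝ), B3 f t γ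
      = ENNReal.ofReal ((F (3*t) - F (2*t))/t) := by
    intro t ht
    rw [mem_Ioi] at ht
    have hpt : ∀ γ, γ ∈ Ioi (0:ℝ) → B3 f t γ
        = (Icc t (2*t)).indicator (fun γ => ENNReal.ofReal (f (t+γ)/t)) γ := by
      intro γ hγ
      rw [B3]
      by_cases h : t ≤ γ ∧ γ ≤ 2*t
      · rw [if_pos h, indicator_of_mem (mem_Icc.2 h)]
      · rw [if_neg h, indicator_of_notMem (fun hm => h (mem_Icc.1 hm))]
    rw [setLIntegral_congr_fun_ae measurableSet_Ioi (ae_of_all _ hpt),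
      lintegral_indicator measurableSet_Icc, Measure.restrict_restrict measurableSet_Icc,
      inter_eq_left.2 (fun γ hγ => mem_Ioi.2 (lt_of_lt_of_le ht hγ.1))]
    rw [← ofReal_integral_eq_lintegral_ofReal
      ((by fun_prop : Continuous fun γ => f (t+γ)/t).integrableOn_Icc)
      ((ae_restrict_iff' measurableSet_Icc).2 (ae_of_all _ fun γ _ =>
        div_nonneg (hn _) ht.le))]
    congr 1
    rw [MeasureTheory.integral_Icc_eq_integral_Ioc,
      ← intervalIntegral.integral_of_le (by linarith), intervalIntegral.integral_div,
      intervalIntegral.integral_comp_add_left f t, ftc hd hc]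
    ring_nf
  rw [setLIntegral_congr_fun_ae measurableSet_Ioi (ae_of_all _ step)]
  exact layer hd hc hn 2 3 (by norm_num) (by norm_num)

-- mass bound for B2

lemma massB2 (hd : ∀ x, HasDerivAt F (f x) x) (hc : Continuous f) (hn : ∀ x, 0 ≤ f x) :
    ∫⁻ t in Ioi (0:ℝ), ∫⁻ γ in Ioi (0:ℝ), B2 f t γ ≤
      ENNReal.ofReal 1 * ∫⁻ s in Ioi (0:ℝ), ENNReal.ofReal (f s) := by
  have step : ∀ t ∈ Ioi (0:ℝ), ∫⁻ γ in Ioi (0:ℝ), B2 f t γ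
      = ENNReal.ofReal ((1/t^2) * ∫ u in (0:ℝ)..(t/1), u * f u) := by
    intro t ht
    rw [mem_Ioi] at ht
    have hpt : ∀ γ, γ ∈ Ioi (0:ℝ) → B2 f t γ
        = (Icc t (2*t)).indicator (fun γ => ENNReal.ofReal ((γ-t)*f (γ-t)/t^2)) γ := by
      intro γ hγ
      rw [B2]
      by_cases h : t ≤ γ ∧ γ ≤ 2*t
      · rw [if_pos h, indicator_of_mem (mem_Icc.2 h)]
      · rw [if_neg h, indicator_of_notMem (fun hm => h (mem_Icc.1 hm))]
    rw [setLIntegral_congr_fun_ae measurableSet_Ioi (ae_of_all _ hpt),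
      lintegral_indicator measurableSet_Icc, Measure.restrict_restrict measurableSet_Icc,
      inter_eq_left.2 (fun γ hγ => mem_Ioi.2 (lt_of_lt_of_le ht hγ.1))]
    rw [← ofReal_integral_eq_lintegral_ofReal
      ((by fun_prop : Continuous fun γ => (γ-t)*f (γ-t)/t^2).integrableOn_Icc)
      ((ae_restrict_iff' measurableSet_Icc).2 (ae_of_all _ fun γ hγ => by
        have h1 : 0 ≤ γ - t := by linarith [hγ.1]
        have := hn (γ - t)
        positivity))]
    congr 1
    rw [MeasureTheory.integral_Icc_eq_integral_Ioc,
      ← intervalIntegral.integral_of_le (by linarith)]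
    have hmove : ∀ γ : ℝ, (γ-t)*f (γ-t)/t^2 = (1/t^2) * ((γ-t) * f (γ-t)) := by
      intro γ; field_simp
    simp_rw [hmove]
    rw [intervalIntegral.integral_const_mul]
    congr 1
    rw [div_one]
    have := intervalIntegral.integral_comp_sub_right (fun u => u * f u) t (a := t) (b := 2*t)
    rw [this]
    congr 1 <;> ring
  rw [setLIntegral_congr_fun_ae measurableSet_Ioi (ae_of_all _ step)]
  have := pat2 hc hn 1 1 (by norm_num) (by norm_num)
  simpa using this

-- mass bound for A3

lemma massA3 (hd : ∀ x, HasDerivAt F (f x) x) (hc : Continuous f) (hn : ∀ x, 0 ≤ f x) :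
    ∫⁻ t in Ioi (0:ℝ), ∫⁻ γ in Ioi (0:ℝ), A3 f t γ ≤
      ENNReal.ofReal 1 * ∫⁻ s in Ioi (0:ℝ), ENNReal.ofReal (f s) := by
  have step : ∀ t ∈ Ioi (0:ℝ), ∫⁻ γ in Ioi (0:ℝ), A3 f t γ
      = ENNReal.ofReal ((2/t^2) * ∫ u in (0:ℝ)..(t/2), u * f u) := by
    intro t ht
    rw [mem_Ioi] at ht
    have hpt : ∀ γ, γ ∈ Ioi (0:ℝ) → A3 f t γ
        = (Icc (t/2) t).indicator (fun γ => ENNReal.ofReal (2*(t-γ)*f (t-γ)/t^2)) γ := by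
      intro γ hγ
      rw [A3]
      by_cases h : γ ≤ t ∧ t ≤ 2*γ
      · rw [if_pos h, indicator_of_mem (mem_Icc.2 ⟨by linarith [h.2], h.1⟩)]
      · rw [if_neg h, indicator_of_notMem (fun hm => by
          rw [mem_Icc] at hm; exact h ⟨hm.2, by linarith [hm.1]⟩)]
    rw [setLIntegral_congr_fun_ae measurableSet_Ioi (ae_of_all _ hpt),
      lintegral_indicator measurableSet_Icc, Measure.restrict_restrict measurableSet_Icc,
      inter_eq_left.2 (fun γ hγ => mem_Ioi.2 (lt_of_lt_of_le (by positivity) hγ.1))]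
    rw [← ofReal_integral_eq_lintegral_ofReal
      ((by fun_prop : Continuous fun γ => 2*(t-γ)*f (t-γ)/t^2).integrableOn_Icc)
      ((ae_restrict_iff' measurableSet_Icc).2 (ae_of_all _ fun γ hγ => by
        have h1 : 0 ≤ t - γ := by linarith [hγ.2]
        have := hn (t - γ)
        positivity))]
    congr 1
    rw [MeasureTheory.integral_Icc_eq_integral_Ioc,
      ← intervalIntegral.integral_of_le (by linarith)]
    have hmove : ∀ γ : ℝ, 2*(t-γ)*f (t-γ)/t^2 = (2/t^2) * ((t-γ) * f (t-γ)) := by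
      intro γ; field_simp
    simp_rw [hmove]
    rw [intervalIntegral.integral_const_mul]
    congr 1
    have := intervalIntegral.integral_comp_sub_left (fun u => u * f u) t (a := t/2) (b := t)
    rw [this]
    congr 1 <;> ring
  rw [setLIntegral_congr_fun_ae measurableSet_Ioi (ae_of_all _ step)]
  have := pat2 hc hn 2 2 (by norm_num) (by norm_num)
  simpa using this

lemma massB1 (hd : ∀ x, HasDerivAt F (f x) x) (hc : Continuous f) (hn : ∀ x, 0 ≤ f x) :
    ∫⁻ t in Ioi (0:ℝ), ∫⁻ γ in Ioi (0:ℝ), B1 f t γ ≤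
      ENNReal.ofReal (Real.log 2) * ∫⁻ s in Ioi (0:ℝ), ENNReal.ofReal (f s) := by
  have step : ∀ t ∈ Ioi (0:ℝ), ∫⁻ γ in Ioi (0:ℝ), B1 f t γ
      = ENNReal.ofReal ((F (2*t) - F (1*t))/t) := by
    intro t ht
    rw [mem_Ioi] at ht
    have hpt : ∀ γ, γ ∈ Ioi (0:ℝ) → B1 f t γ
        = (Ioc (0:ℝ) t).indicator (fun γ => ENNReal.ofReal (f (t+γ)/t)) γ := by
      intro γ hγ
      rw [mem_Ioi] at hγ
      rw [B1, indicator]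
      by_cases h : γ ≤ t
      · rw [if_pos h, if_pos ⟨hγ, h⟩]
      · rw [if_neg h, if_neg (fun hm => h hm.2)]
    rw [setLIntegral_congr_fun_ae measurableSet_Ioi (ae_of_all _ hpt),
      lintegral_indicator measurableSet_Ioc, Measure.restrict_restrict measurableSet_Ioc,
      inter_eq_left.2 (fun γ hγ => mem_Ioi.2 hγ.1)]
    rw [← ofReal_integral_eq_lintegral_ofReal
      ((by fun_prop : Continuous fun γ => f (t+γ)/t).integrableOn_Ioc)
      ((ae_restrict_iff' measurableSet_Ioc).2 (ae_of_all _ fun γ _ =>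
        div_nonneg (hn _) ht.le))]
    congr 1
    rw [← intervalIntegral.integral_of_le ht.le, intervalIntegral.integral_div,
      intervalIntegral.integral_comp_add_left f t, ftc hd hc]
    norm_num
    rw [two_mul]
  rw [setLIntegral_congr_fun_ae measurableSet_Ioi (ae_of_all _ step)]
  have := layer hd hc hn 1 2 one_pos one_le_two
  norm_num at this ⊢
  exact this

lemma lint_f (hd : ∀ x, HasDerivAt F (f x) x) (hc : Continuous f) (hn : ∀ x, 0 ≤ f x)
    {c : ℝ} (hFb : ∀ T, F T - F 0 ≤ c) :
    ∫⁻ s in Ioi (0:ℝ), ENNReal.ofReal (f s) ≤ ENNReal.ofReal c := by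
  apply lint_Ioi_le hc.measurable 0 c
  · intro n; exact hc.integrableOn_Ioc
  · intro s _; exact hn s
  · intro n
    rw [← intervalIntegral.integral_of_le (by simp [Nat.cast_nonneg]), ftc hd hc]
    simpa using hFb ((0:ℝ) + n)

set_option maxHeartbeats 400000 in
/-- positive-part mass bound -/

lemma Wpos (hd : ∀ x, HasDerivAt F (f x) x) (hc : Continuous f) (hn : ∀ x, 0 ≤ f x)
    (he : ∀ x, f (-x) = f x) (hdec : AntitoneOn f (Set.Ici (0:ℝ))) (hmono : Monotone F)
    {c : ℝ} (hcnn : 0 ≤ c) (hFb : ∀ T, F T - F 0 ≤ c) :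
    ∫⁻ t in Ioi (0:ℝ), ∫⁻ γ in Ioi (0:ℝ), ENNReal.ofReal (ww f t γ) ≤
      ENNReal.ofReal (4*c) := by
  set L := ∫⁻ s in Ioi (0:ℝ), ENNReal.ofReal (f s) with hL
  have hstep : ∀ t ∈ Ioi (0:ℝ), ∫⁻ γ in Ioi (0:ℝ), ENNReal.ofReal (ww f t γ)
      ≤ ∫⁻ γ in Ioi (0:ℝ), (A1 f t γ + A2 f t γ + A3 f t γ) := by
    intro t ht
    apply setLIntegral_mono' measurableSet_Ioi
    intro γ hγ
    exact wpos_ptwise he hn hdec (mem_Ioi.1 ht) (mem_Ioi.1 hγ)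
  have hmA1 : ∀ t : ℝ, Measurable (fun γ => A1 f t γ) :=
    fun t => (measA1 hc).comp (measurable_const.prodMk measurable_id)
  have hmA2 : ∀ t : ℝ, Measurable (fun γ => A2 f t γ) :=
    fun t => (measA2 hc).comp (measurable_const.prodMk measurable_id)
  have hmA3 : ∀ t : ℝ, Measurable (fun γ => A3 f t γ) :=
    fun t => (measA3 hc).comp (measurable_const.prodMk measurable_id)
  have hsplit : ∀ t : ℝ, ∫⁻ γ in Ioi (0:ℝ), (A1 f t γ + A2 f t γ + A3 f t γ)
      = (∫⁻ γ in Ioi (0:ℝ), A1 f t γ) + (∫⁻ γ in Ioi (0:ℝ), A2 f t γ)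
        + (∫⁻ γ in Ioi (0:ℝ), A3 f t γ) := by
    intro t
    rw [lintegral_add_left ((hmA1 t).fun_add (hmA2 t)), lintegral_add_left (hmA1 t)]
  have houter : Measurable (fun t => ∫⁻ γ in Ioi (0:ℝ), A1 f t γ) :=
    Measurable.lintegral_prod_right' (measA1 hc)
  have houter2 : Measurable (fun t => ∫⁻ γ in Ioi (0:ℝ), A2 f t γ) :=
    Measurable.lintegral_prod_right' (measA2 hc)
  calc ∫⁻ t in Ioi (0:ℝ), ∫⁻ γ in Ioi (0:ℝ), ENNReal.ofReal (ww f t γ)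
      ≤ ∫⁻ t in Ioi (0:ℝ), ((∫⁻ γ in Ioi (0:ℝ), A1 f t γ) + (∫⁻ γ in Ioi (0:ℝ), A2 f t γ)
          + (∫⁻ γ in Ioi (0:ℝ), A3 f t γ)) := by
        apply setLIntegral_mono' measurableSet_Ioi
        intro t ht
        rw [← hsplit t]
        exact hstep t ht
    _ = (∫⁻ t in Ioi (0:ℝ), ∫⁻ γ in Ioi (0:ℝ), A1 f t γ)
        + (∫⁻ t in Ioi (0:ℝ), ∫⁻ γ in Ioi (0:ℝ), A2 f t γ)
        + (∫⁻ t in Ioi (0:ℝ), ∫⁻ γ in Ioi (0:ℝ), A3 f t γ) := by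
        rw [lintegral_add_left (houter.fun_add houter2), lintegral_add_left houter]
    _ ≤ ENNReal.ofReal (Real.log 2) * L + ENNReal.ofReal (Real.log 3) * L
        + ENNReal.ofReal 1 * L :=
        add_le_add (add_le_add (massA1 hd hc hn) (massA2 hd hc hn he hdec hmono))
          (massA3 hd hc hn)
    _ = (ENNReal.ofReal (Real.log 2) + ENNReal.ofReal (Real.log 3) + ENNReal.ofReal 1) * L := by
        ring
    _ ≤ (ENNReal.ofReal (Real.log 2) + ENNReal.ofReal (Real.log 3) + ENNReal.ofReal 1)
        * ENNReal.ofReal c := by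
        exact mul_le_mul_right (lint_f hd hc hn hFb) _
    _ ≤ ENNReal.ofReal (4*c) := by
        have h2' : (0:ℝ) ≤ Real.log 2 := log_nonneg one_le_two
        have h3' : (0:ℝ) ≤ Real.log 3 := log_nonneg (by norm_num)
        rw [← ENNReal.ofReal_add h2' h3',
          ← ENNReal.ofReal_add (by linarith) (by norm_num : (0:ℝ) ≤ 1),
          ← ENNReal.ofReal_mul (by linarith)]
        apply ENNReal.ofReal_le_ofReal
        have h2 : Real.log 2 ≤ 1 := by
          have := Real.log_le_sub_one_of_pos (by norm_num : (0:ℝ) < 2); linarith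
        have h3 : Real.log 3 ≤ 2 := by
          have := Real.log_le_sub_one_of_pos (by norm_num : (0:ℝ) < 3); linarith
        nlinarith

lemma Wneg (hd : ∀ x, HasDerivAt F (f x) x) (hc : Continuous f) (hn : ∀ x, 0 ≤ f x)
    (he : ∀ x, f (-x) = f x) (hdec : AntitoneOn f (Set.Ici (0:ℝ))) (hmono : Monotone F)
    {c : ℝ} (hcnn : 0 ≤ c) (hFb : ∀ T, F T - F 0 ≤ c) :
    ∫⁻ t in Ioi (0:ℝ), ∫⁻ γ in Ioi (0:ℝ), ENNReal.ofReal (-ww f t γ) ≤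
      ENNReal.ofReal (4*c) := by
  set L := ∫⁻ s in Ioi (0:ℝ), ENNReal.ofReal (f s) with hL
  have hmB1 : ∀ t : ℝ, Measurable (fun γ => B1 f t γ) :=
    fun t => (measB1 hc).comp (measurable_const.prodMk measurable_id)
  have hmB2 : ∀ t : ℝ, Measurable (fun γ => B2 f t γ) :=
    fun t => (measB2 hc).comp (measurable_const.prodMk measurable_id)
  have hsplit : ∀ t : ℝ, ∫⁻ γ in Ioi (0:ℝ), (B1 f t γ + B2 f t γ + B3 f t γ)
      = (∫⁻ γ in Ioi (0:ℝ), B1 f t γ) + (∫⁻ γ in Ioi (0:ℝ), B2 f t γ)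
        + (∫⁻ γ in Ioi (0:ℝ), B3 f t γ) := by
    intro t
    rw [lintegral_add_left ((hmB1 t).fun_add (hmB2 t)), lintegral_add_left (hmB1 t)]
  have houter : Measurable (fun t => ∫⁻ γ in Ioi (0:ℝ), B1 f t γ) :=
    Measurable.lintegral_prod_right' (measB1 hc)
  have houter2 : Measurable (fun t => ∫⁻ γ in Ioi (0:ℝ), B2 f t γ) :=
    Measurable.lintegral_prod_right' (measB2 hc)
  calc ∫⁻ t in Ioi (0:ℝ), ∫⁻ γ in Ioi (0:ℝ), ENNReal.ofReal (-ww f t γ)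
      ≤ ∫⁻ t in Ioi (0:ℝ), ((∫⁻ γ in Ioi (0:ℝ), B1 f t γ) + (∫⁻ γ in Ioi (0:ℝ), B2 f t γ)
          + (∫⁻ γ in Ioi (0:ℝ), B3 f t γ)) := by
        apply setLIntegral_mono' measurableSet_Ioi
        intro t ht
        rw [← hsplit t]
        apply setLIntegral_mono' measurableSet_Ioi
        intro γ hγ
        exact wneg_ptwise he hn hdec (mem_Ioi.1 ht) (mem_Ioi.1 hγ)
    _ = (∫⁻ t in Ioi (0:ℝ), ∫⁻ γ in Ioi (0:ℝ), B1 f t γ)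
        + (∫⁻ t in Ioi (0:ℝ), ∫⁻ γ in Ioi (0:ℝ), B2 f t γ)
        + (∫⁻ t in Ioi (0:ℝ), ∫⁻ γ in Ioi (0:ℝ), B3 f t γ) := by
        rw [lintegral_add_left (houter.fun_add houter2), lintegral_add_left houter]
    _ ≤ ENNReal.ofReal (Real.log 2) * L + ENNReal.ofReal 1 * L
        + ENNReal.ofReal (Real.log (3/2)) * L :=
        add_le_add (add_le_add (massB1 hd hc hn) (massB2 hd hc hn)) (massB3 hd hc hn)
    _ = (ENNReal.ofReal (Real.log 2) + ENNReal.ofReal 1 + ENNReal.ofReal (Real.log (3/2))) * L := by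
        ring
    _ ≤ (ENNReal.ofReal (Real.log 2) + ENNReal.ofReal 1 + ENNReal.ofReal (Real.log (3/2)))
        * ENNReal.ofReal c := mul_le_mul_right (lint_f hd hc hn hFb) _
    _ ≤ ENNReal.ofReal (4*c) := by
        have h2' : (0:ℝ) ≤ Real.log 2 := log_nonneg one_le_two
        have h32' : (0:ℝ) ≤ Real.log (3/2) := log_nonneg (by norm_num)
        rw [← ENNReal.ofReal_add h2' (by norm_num : (0:ℝ) ≤ 1),
          ← ENNReal.ofReal_add (by linarith) h32',
          ← ENNReal.ofReal_mul (by linarith)]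
        apply ENNReal.ofReal_le_ofReal
        have h2 : Real.log 2 ≤ 1 := by
          have := Real.log_le_sub_one_of_pos (by norm_num : (0:ℝ) < 2); linarith
        have h32 : Real.log (3/2) ≤ 1/2 := by
          have := Real.log_le_sub_one_of_pos (by norm_num : (0:ℝ) < 3/2); linarith
        nlinarith

lemma hasDerivAt_shift (hd : ∀ x, HasDerivAt F (f x) x) (γ t : ℝ) :
    HasDerivAt (fun t => F (t - γ) - F (t + γ)) (f (t-γ) - f (t+γ)) t := by
  have h1 : HasDerivAt (fun t : ℝ => F (t - γ)) (f (t-γ)) t := by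
    simpa [Function.comp_def] using (hd (t-γ)).comp t ((hasDerivAt_id t).sub_const γ)
  have h2 : HasDerivAt (fun t : ℝ => F (t + γ)) (f (t+γ)) t := by
    simpa [Function.comp_def] using (hd (t+γ)).comp t ((hasDerivAt_id t).add_const γ)
  exact h1.sub h2

lemma G_ftc (hd : ∀ x, HasDerivAt F (f x) x) (hc : Continuous f) (x y γ : ℝ) :
    ∫ t in x..y, (f (t-γ) - f (t+γ)) =
      F (y - γ) - F (y + γ) - (F (x - γ) - F (x + γ)) :=
  intervalIntegral.integral_eq_sub_of_hasDerivAt (fun t _ => hasDerivAt_shift hd γ t)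
    ((by fun_prop : Continuous fun t => f (t-γ) - f (t+γ)).intervalIntegrable _ _)

lemma contF (hd : ∀ x, HasDerivAt F (f x) x) : Continuous F :=
  Differentiable.continuous (fun t => (hd t).differentiableAt)

lemma repr_u (hd : ∀ x, HasDerivAt F (f x) x) (hc : Continuous f) (hn : ∀ x, 0 ≤ f x)
    (he : ∀ x, f (-x) = f x) (hdec : AntitoneOn f (Set.Ici (0:ℝ)))
    {x y : ℝ} (hx : 0 ≤ x) (hxy : x < y) :
    ∫ γ in Ioi (0:ℝ), (F (y - γ) - F (y + γ) - F (x - γ) + F (x + γ)) / γ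
      = (∫⁻ t in Ioo x y, ∫⁻ γ in Ioi (0:ℝ), ENNReal.ofReal (uu f t γ)).toReal := by
  have hF := contF hd
  simp only [uu]
  have hGnn : ∀ γ, 0 < γ → 0 ≤ (F (y - γ) - F (y + γ) - F (x - γ) + F (x + γ)) / γ := by
    intro γ hγ
    apply div_nonneg _ hγ.le
    have h := G_ftc hd hc x y γ
    have hint : 0 ≤ ∫ t in x..y, (f (t-γ) - f (t+γ)) := by
      apply intervalIntegral.integral_nonneg hxy.le
      intro t ht
      have := f_pair he hdec (t := t) (γ := γ) (by linarith [ht.1]) hγ.le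
      linarith
    linarith [h ▸ hint]
  have hmeas : AEStronglyMeasurable
      (fun γ => (F (y - γ) - F (y + γ) - F (x - γ) + F (x + γ)) / γ)
      (volume.restrict (Ioi (0:ℝ))) := by
    apply Measurable.aestronglyMeasurable
    exact ((by fun_prop : Continuous fun γ =>
      F (y - γ) - F (y + γ) - F (x - γ) + F (x + γ)).measurable).div measurable_id
  rw [MeasureTheory.integral_eq_lintegral_of_nonneg_ae
    ((ae_restrict_iff' measurableSet_Ioi).2 (ae_of_all _ fun γ hγ => hGnn γ (mem_Ioi.1 hγ)))
    hmeas]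
  congr 1
  have hptw : ∀ γ, γ ∈ Ioi (0:ℝ) →
      ENNReal.ofReal ((F (y - γ) - F (y + γ) - F (x - γ) + F (x + γ)) / γ)
        = ∫⁻ t in Ioo x y, ENNReal.ofReal ((f (t-γ) - f (t+γ))/γ) := by
    intro γ hγ
    rw [mem_Ioi] at hγ
    have heq : (F (y - γ) - F (y + γ) - F (x - γ) + F (x + γ)) / γ
        = ∫ t in Ioc x y, (f (t-γ) - f (t+γ))/γ := by
      rw [← intervalIntegral.integral_of_le hxy.le]
      rw [intervalIntegral.integral_div, G_ftc hd hc]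
      ring
    rw [heq, ofReal_integral_eq_lintegral_ofReal
      ((by fun_prop : Continuous fun t => (f (t-γ) - f (t+γ))/γ).integrableOn_Ioc)
      ((ae_restrict_iff' measurableSet_Ioc).2 (ae_of_all _ fun t ht => by
        apply div_nonneg _ hγ.le
        have := f_pair he hdec (t := t) (γ := γ) (by linarith [ht.1]) hγ.le
        linarith))]
    exact setLIntegral_congr Ioo_ae_eq_Ioc.symm
  rw [setLIntegral_congr_fun_ae measurableSet_Ioi (ae_of_all _ hptw)]
  refine lintegral_lintegral_swap ?_
  have : Measurable (fun p : ℝ × ℝ => ENNReal.ofReal (uu f p.2 p.1)) :=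
    ((measuu hc).comp measurable_swap).ennreal_ofReal
  simp only [uu] at this
  exact this.aemeasurable

lemma vv_inner (hd : ∀ x, HasDerivAt F (f x) x) (hc : Continuous f) (hn : ∀ x, 0 ≤ f x)
    {t : ℝ} (ht : 0 < t) :
    ∫⁻ γ in Ioi (0:ℝ), ENNReal.ofReal (vv f t γ) = ENNReal.ofReal ((F t - F (-t))/t) := by
  have hptw : ∀ γ, γ ∈ Ioi (0:ℝ) → ENNReal.ofReal (vv f t γ)
      = (Ioo (0:ℝ) (2*t)).indicator (fun γ => ENNReal.ofReal (f (t-γ)/t)) γ := by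
    intro γ hγ
    rw [mem_Ioi] at hγ
    rw [vv]
    by_cases h : γ < 2*t
    · rw [if_pos h, indicator_of_mem (mem_Ioo.2 ⟨hγ, h⟩)]
    · rw [if_neg h, indicator_of_notMem (fun hm => h (mem_Ioo.1 hm).2)]
      simp
  rw [setLIntegral_congr_fun_ae measurableSet_Ioi (ae_of_all _ hptw),
    lintegral_indicator measurableSet_Ioo, Measure.restrict_restrict measurableSet_Ioo,
    inter_eq_left.2 (fun γ hγ => mem_Ioi.2 (mem_Ioo.1 hγ).1)]
  rw [setLIntegral_congr (Ioo_ae_eq_Ioc (a := (0:ℝ)) (b := 2*t))]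
  rw [← ofReal_integral_eq_lintegral_ofReal
    ((by fun_prop : Continuous fun γ => f (t-γ)/t).integrableOn_Ioc)
    ((ae_restrict_iff' measurableSet_Ioc).2 (ae_of_all _ fun γ _ =>
      div_nonneg (hn _) ht.le))]
  congr 1
  rw [← intervalIntegral.integral_of_le (by linarith), intervalIntegral.integral_div,
    intervalIntegral.integral_comp_sub_left f t, ftc hd hc]
  congr 3 <;> ring

lemma repr_v (hd : ∀ x, HasDerivAt F (f x) x) (hc : Continuous f) (hn : ∀ x, 0 ≤ f x)
    (hmono : Monotone F) {x y : ℝ} (hx : 0 ≤ x) (hxy : x < y) :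
    ∫ γ in x..y, (F γ - F (-γ))/γ
      = (∫⁻ t in Ioo x y, ∫⁻ γ in Ioi (0:ℝ), ENNReal.ofReal (vv f t γ)).toReal := by
  have hF := contF hd
  rw [intervalIntegral.integral_of_le hxy.le, MeasureTheory.integral_Ioc_eq_integral_Ioo]
  rw [MeasureTheory.integral_eq_lintegral_of_nonneg_ae
    ((ae_restrict_iff' measurableSet_Ioo).2 (ae_of_all _ fun t ht => by
      have h0 : 0 < t := lt_of_le_of_lt hx ht.1
      apply div_nonneg _ h0.le
      have : F (-t) ≤ F t := hmono (by linarith)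
      linarith))
    (Measurable.aestronglyMeasurable
      (show Measurable fun t : ℝ => (F t - F (-t))/t from
        ((by fun_prop : Continuous fun t : ℝ => F t - F (-t)).measurable).div measurable_id))]
  congr 1
  apply setLIntegral_congr_fun_ae measurableSet_Ioo
  apply ae_of_all
  intro t ht
  exact (vv_inner hd hc hn (lt_of_le_of_lt hx ht.1)).symm

theorem statement13 (μ ν : ℝ) (hμ1 : 1 / 2 < μ) (hμ2 : μ ≤ 2) (hν1 : 0 < ν) (hν2 : ν < 1 / 2)
    (𝔉 𝔉' : ℝ → ℝ) (hderiv : ∀ x : ℝ, HasDerivAt 𝔉 (𝔉' x) x) (hcont : Continuous 𝔉')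
    (heven : ∀ x : ℝ, 𝔉' (-x) = 𝔉' x) (hnonneg : ∀ x : ℝ, 0 ≤ 𝔉' x)
    (hdec : AntitoneOn 𝔉' (Set.Ici (0 : ℝ)))
    (a b : ℝ) (ha : Filter.Tendsto 𝔉 Filter.atTop (nhds a))
    (hb : Filter.Tendsto 𝔉 Filter.atBot (nhds b))
    (hab : a - b = (μ - ν) * Real.pi) :
    (∀ x : ℝ, DF 𝔉 0 x = DF 𝔉 0 (-x)) ∧
    (∀ x y : ℝ, 0 ≤ x → x < y → 0 ≤ DF 𝔉 x y) ∧
    (∀ x y : ℝ, 0 ≤ x → x < y →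
      ∃ R : ℝ, DF 𝔉 x y = (1 / Real.pi) * (∫ γ in x..y, (𝔉 γ - 𝔉 (-γ)) / γ) + R ∧
        -2 * (μ - ν) ≤ R ∧ R ≤ 2 * (μ - ν)) := by
  have hπ : (0:ℝ) < Real.pi := Real.pi_pos
  have hμν : 0 < μ - ν := by linarith
  have hmono : Monotone 𝔉 := mono_F hderiv hnonneg
  have hodd : ∀ t : ℝ, 𝔉 t + 𝔉 (-t) = 2 * 𝔉 0 := odd_sum hderiv heven
  -- identify b
  have hbval : b = 2 * 𝔉 0 - a := by
    have h1 : Tendsto (fun t : ℝ => 𝔉 (-t)) atTop (nhds b) :=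
      hb.comp tendsto_neg_atTop_atBot
    have h2 : Tendsto (fun t : ℝ => 2 * 𝔉 0 - 𝔉 t) atTop (nhds (2 * 𝔉 0 - a)) :=
      tendsto_const_nhds.sub ha
    refine tendsto_nhds_unique (h1.congr (fun t => ?_)) h2
    have := hodd t
    linarith
  set c : ℝ := a - 𝔉 0 with hc_def
  have hc4 : 4 * c = 2 * ((μ - ν) * Real.pi) := by
    have : a - b = 2 * c := by rw [hbval]; ring
    linarith [hab]
  have hcnn : 0 ≤ c := by nlinarith
  have hFb : ∀ T, 𝔉 T - 𝔉 0 ≤ c := by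
    intro T
    have : 𝔉 T ≤ a := hmono.ge_of_tendsto ha T
    linarith
  refine ⟨?_, ?_, ?_⟩
  · -- part (i)
    intro x
    unfold DF
    congr 1
    apply integral_congr_ae
    apply ae_of_all
    intro γ
    show (𝔉 (x - γ) - 𝔉 (x + γ) - 𝔉 (0 - γ) + 𝔉 (0 + γ)) / γ
      = (𝔉 (-x - γ) - 𝔉 (-x + γ) - 𝔉 (0 - γ) + 𝔉 (0 + γ)) / γ
    have e1 : -x - γ = -(x + γ) := by ring
    have e2 : -x + γ = -(x - γ) := by ring
    have h1 := hodd (x + γ)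
    have h2 := hodd (x - γ)
    rw [e1, e2]
    have g1 : 𝔉 (-(x+γ)) = 2 * 𝔉 0 - 𝔉 (x+γ) := by linarith
    have g2 : 𝔉 (-(x-γ)) = 2 * 𝔉 0 - 𝔉 (x-γ) := by linarith
    rw [g1, g2]
    ring
  · -- part (ii)
    intro x y hx hxy
    unfold DF
    apply mul_nonneg (by positivity)
    apply setIntegral_nonneg measurableSet_Ioi
    intro γ hγ
    rw [mem_Ioi] at hγ
    apply div_nonneg _ hγ.le
    have h := G_ftc hderiv hcont x y γ
    have hint : 0 ≤ ∫ t in x..y, (𝔉' (t-γ) - 𝔉' (t+γ)) := by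
      apply intervalIntegral.integral_nonneg hxy.le
      intro t ht
      have := f_pair heven hdec (t := t) (γ := γ) (by linarith [ht.1]) hγ.le
      linarith
    linarith [h ▸ hint]
  · -- part (iii)
    intro x y hx hxy
    set Iu := ∫⁻ t in Ioo x y, ∫⁻ γ in Ioi (0:ℝ), ENNReal.ofReal (uu 𝔉' t γ) with hIu_def
    set Iv := ∫⁻ t in Ioo x y, ∫⁻ γ in Ioi (0:ℝ), ENNReal.ofReal (vv 𝔉' t γ) with hIv_def
    have hDF : DF 𝔉 x y = (1/Real.pi) * Iu.toReal := by
      unfold DF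
      rw [repr_u hderiv hcont hnonneg heven hdec hx hxy]
    have hmain : ∫ γ in x..y, (𝔉 γ - 𝔉 (-γ))/γ = Iv.toReal :=
      repr_v hderiv hcont hnonneg hmono hx hxy
    -- bound f by f 0
    have hf0 : ∀ u : ℝ, 𝔉' u ≤ 𝔉' 0 := by
      intro u
      have habs : 𝔉' u = 𝔉' |u| := by
        rcases abs_cases u with ⟨h, _⟩ | ⟨h, _⟩
        · rw [h]
        · rw [h, heven]
      rw [habs]
      exact hdec (mem_Ici.2 le_rfl) (mem_Ici.2 (abs_nonneg u)) (abs_nonneg u)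
    -- finiteness of Iv
    have hIvfin : Iv ≠ ⊤ := by
      have hbd : ∀ t ∈ Ioo x y, (∫⁻ γ in Ioi (0:ℝ), ENNReal.ofReal (vv 𝔉' t γ))
          ≤ ENNReal.ofReal (2 * 𝔉' 0) := by
        intro t ht
        have h0 : 0 < t := lt_of_le_of_lt hx ht.1
        rw [vv_inner hderiv hcont hnonneg h0]
        apply ENNReal.ofReal_le_ofReal
        rw [div_le_iff₀ h0]
        have hftc : 𝔉 t - 𝔉 (-t) = ∫ s in (-t)..t, 𝔉' s := (ftc hderiv hcont _ _).symm
        rw [hftc]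
        have hmon : ∫ s in (-t)..t, 𝔉' s ≤ ∫ s in (-t)..t, 𝔉' 0 := by
          apply intervalIntegral.integral_mono_on (by linarith)
            (hcont.intervalIntegrable _ _) (intervalIntegrable_const)
          intro s _
          exact hf0 s
        have hconst : ∫ s in (-t)..t, (𝔉' 0 : ℝ) = 2 * 𝔉' 0 * t := by
          simp [intervalIntegral.integral_const]
          ring
        linarith
      have : Iv ≤ ENNReal.ofReal (2 * 𝔉' 0) * volume (Ioo x y) := by
        calc Iv ≤ ∫⁻ _ in Ioo x y, ENNReal.ofReal (2 * 𝔉' 0) :=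
              setLIntegral_mono' measurableSet_Ioo hbd
          _ = ENNReal.ofReal (2 * 𝔉' 0) * volume (Ioo x y) := setLIntegral_const _ _
      apply ne_top_of_le_ne_top _ this
      rw [Real.volume_Ioo]
      exact ENNReal.mul_ne_top ENNReal.ofReal_ne_top ENNReal.ofReal_ne_top
    -- comparison bounds
    have hsub : Ioo x y ⊆ Ioi (0:ℝ) := fun t ht => mem_Ioi.2 (lt_of_le_of_lt hx ht.1)
    have hWw : (∫⁻ t in Ioo x y, ∫⁻ γ in Ioi (0:ℝ), ENNReal.ofReal (ww 𝔉' t γ))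
        ≤ ENNReal.ofReal (4*c) := by
      refine le_trans (lintegral_mono_set hsub) ?_
      exact Wpos hderiv hcont hnonneg heven hdec hmono hcnn hFb
    have hWw' : (∫⁻ t in Ioo x y, ∫⁻ γ in Ioi (0:ℝ), ENNReal.ofReal (-ww 𝔉' t γ))
        ≤ ENNReal.ofReal (4*c) := by
      refine le_trans (lintegral_mono_set hsub) ?_
      exact Wneg hderiv hcont hnonneg heven hdec hmono hcnn hFb
    have hmvv : ∀ t : ℝ, Measurable (fun γ => ENNReal.ofReal (vv 𝔉' t γ)) := fun t =>
      (((measvv hcont).comp (measurable_const.prodMk measurable_id))).ennreal_ofReal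
    have hmuu : ∀ t : ℝ, Measurable (fun γ => ENNReal.ofReal (uu 𝔉' t γ)) := fun t =>
      (((measuu hcont).comp (measurable_const.prodMk measurable_id))).ennreal_ofReal
    have hmww : ∀ t : ℝ, Measurable (fun γ => ENNReal.ofReal (ww 𝔉' t γ)) := fun t =>
      (((measww hcont).comp (measurable_const.prodMk measurable_id))).ennreal_ofReal
    have hmww' : ∀ t : ℝ, Measurable (fun γ => ENNReal.ofReal (-ww 𝔉' t γ)) := fun t =>
      ((((measww hcont).comp (measurable_const.prodMk measurable_id))).neg).ennreal_ofReal
    have houtv : Measurable (fun t => ∫⁻ γ in Ioi (0:ℝ), ENNReal.ofReal (vv 𝔉' t γ)) :=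
      Measurable.lintegral_prod_right' ((measvv hcont).ennreal_ofReal)
    have houtu : Measurable (fun t => ∫⁻ γ in Ioi (0:ℝ), ENNReal.ofReal (uu 𝔉' t γ)) :=
      Measurable.lintegral_prod_right' ((measuu hcont).ennreal_ofReal)
    have hIu_le : Iu ≤ Iv + ENNReal.ofReal (4*c) := by
      have hptw : ∀ t γ : ℝ, ENNReal.ofReal (uu 𝔉' t γ)
          ≤ ENNReal.ofReal (vv 𝔉' t γ) + ENNReal.ofReal (ww 𝔉' t γ) := by
        intro t γ
        have : uu 𝔉' t γ = vv 𝔉' t γ + ww 𝔉' t γ := by rw [ww]; ring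
        rw [this]
        exact ENNReal.ofReal_add_le
      calc Iu ≤ ∫⁻ t in Ioo x y, ((∫⁻ γ in Ioi (0:ℝ), ENNReal.ofReal (vv 𝔉' t γ))
            + (∫⁻ γ in Ioi (0:ℝ), ENNReal.ofReal (ww 𝔉' t γ))) :=
            lintegral_mono (fun t => by
              rw [← lintegral_add_left (hmvv t)]
              exact lintegral_mono (fun γ => hptw t γ))
        _ = Iv + (∫⁻ t in Ioo x y, ∫⁻ γ in Ioi (0:ℝ), ENNReal.ofReal (ww 𝔉' t γ)) :=
            lintegral_add_left houtv _
        _ ≤ Iv + ENNReal.ofReal (4*c) := add_le_add_right hWw _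
    have hIv_le : Iv ≤ Iu + ENNReal.ofReal (4*c) := by
      have hptw : ∀ t γ : ℝ, ENNReal.ofReal (vv 𝔉' t γ)
          ≤ ENNReal.ofReal (uu 𝔉' t γ) + ENNReal.ofReal (-ww 𝔉' t γ) := by
        intro t γ
        have : vv 𝔉' t γ = uu 𝔉' t γ + (-ww 𝔉' t γ) := by rw [ww]; ring
        rw [this]
        exact ENNReal.ofReal_add_le
      calc Iv ≤ ∫⁻ t in Ioo x y, ((∫⁻ γ in Ioi (0:ℝ), ENNReal.ofReal (uu 𝔉' t γ))
            + (∫⁻ γ in Ioi (0:ℝ), ENNReal.ofReal (-ww 𝔉' t γ))) :=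
            lintegral_mono (fun t => by
              rw [← lintegral_add_left (hmuu t)]
              exact lintegral_mono (fun γ => hptw t γ))
        _ = Iu + (∫⁻ t in Ioo x y, ∫⁻ γ in Ioi (0:ℝ), ENNReal.ofReal (-ww 𝔉' t γ)) :=
            lintegral_add_left houtu _
        _ ≤ Iu + ENNReal.ofReal (4*c) := add_le_add_right hWw' _
    have hIufin : Iu ≠ ⊤ :=
      ne_top_of_le_ne_top (ENNReal.add_ne_top.2 ⟨hIvfin, ENNReal.ofReal_ne_top⟩) hIu_le
    have hPQ : Iu.toReal ≤ Iv.toReal + 4*c := by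
      have h1 := ENNReal.toReal_mono (ENNReal.add_ne_top.2 ⟨hIvfin, ENNReal.ofReal_ne_top⟩) hIu_le
      rwa [ENNReal.toReal_add hIvfin ENNReal.ofReal_ne_top,
        ENNReal.toReal_ofReal (by linarith)] at h1
    have hQP : Iv.toReal ≤ Iu.toReal + 4*c := by
      have h1 := ENNReal.toReal_mono (ENNReal.add_ne_top.2 ⟨hIufin, ENNReal.ofReal_ne_top⟩) hIv_le
      rwa [ENNReal.toReal_add hIufin ENNReal.ofReal_ne_top,
        ENNReal.toReal_ofReal (by linarith)] at h1
    refine ⟨(1/Real.pi) * (Iu.toReal - Iv.toReal), ?_, ?_, ?_⟩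
    · rw [hDF, hmain]; ring
    · rw [show (1:ℝ)/Real.pi * (Iu.toReal - Iv.toReal)
        = (Iu.toReal - Iv.toReal)/Real.pi from by ring, le_div_iff₀ hπ]
      nlinarith [hQP, hc4]
    · rw [show (1:ℝ)/Real.pi * (Iu.toReal - Iv.toReal)
        = (Iu.toReal - Iv.toReal)/Real.pi from by ring, div_le_iff₀ hπ]
      nlinarith [hPQ, hc4]
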